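/- Let k be a field and let G = (kˣ × kˣ) ⋊ ℤ/2ℤ, where the generator of ℤ/2ℤ acts on kˣ × kˣ by swapping the two factors. The map φ : GL₂(k) × G × kˣ → GL₂(k) × G defined by φ(A, B, t) = ((det A / t) · A, z(A,t) · B), where z(A,t) is the central element ((det A / t)⁴, (det A / t)⁴) of the kˣ × kˣ factor of G, is a surjective group homomorphism whose kernel is exactly the image of the homomorphism kˣ → GL₂(k) × G × kˣ sending t to (t·I, ((t⁴, t⁴), 0), t³); an inverse of the induced isomorphism is induced by (A, B) ↦ (A, B, det A). -/

import Mathlib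

open Matrix

/-- The swap automorphism of `kˣ × kˣ`. -/
def swapAut (k : Type*) [Field k] : MulAut (kˣ × kˣ) :=
  MulEquiv.prodComm

/-- The action of ℤ/2ℤ on kˣ × kˣ in which the generator swaps the two factors. -/
def swapHom (k : Type*) [Field k] : Multiplicative (ZMod 2) →* MulAut (kˣ × kˣ) where
  toFun z := swapAut k ^ (Multiplicative.toAdd z).val
  map_one' := rfl
  map_mul' x y := by
    have hσ : swapAut k ^ 2 = 1 := by
      ext p <;> rfl
    have key : ∀ a b : ZMod 2, (a + b).val = (a.val + b.val) % 2 := by decide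
    have h2 : ∀ n : ℕ, swapAut k ^ (n % 2) = swapAut k ^ n := fun n => by
      conv_rhs => rw [← Nat.div_add_mod n 2]
      rw [pow_add, pow_mul, hσ, one_pow, one_mul]
    show swapAut k ^ (Multiplicative.toAdd x + Multiplicative.toAdd y).val = _
    rw [key, h2, pow_add]

/-- G = (kˣ × kˣ) ⋊ ℤ/2ℤ, the generator of ℤ/2ℤ acting by swapping the factors. -/
abbrev Gbe (k : Type*) [Field k] :=
  SemidirectProduct (kˣ × kˣ) (Multiplicative (ZMod 2)) (swapHom k)

/-- scalar matrices as units -/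
def scMap (k : Type*) [Field k] : kˣ →* GL (Fin 2) k :=
  Units.map (algebraMap k (Matrix (Fin 2) (Fin 2) k)).toMonoidHom

lemma scMap_comm {k : Type*} [Field k] (s : kˣ) (A : GL (Fin 2) k) :
    scMap k s * A = A * scMap k s := by
  ext : 1
  simpa [scMap] using Algebra.commutes (s : k) (A : Matrix (Fin 2) (Fin 2) k)

lemma det_scMap {k : Type*} [Field k] (s : kˣ) :
    Matrix.GeneralLinearGroup.det (scMap k s) = s ^ 2 := by
  ext
  simp [scMap, Matrix.GeneralLinearGroup.val_det_apply, Algebra.algebraMap_eq_smul_one,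
    Matrix.det_smul]

lemma swap_pow_fix {k : Type*} [Field k] (n : ℕ) (c : kˣ) :
    ((swapAut k ^ n) (c, c)) = (c, c) := by
  induction n with
  | zero => rfl
  | succ n ih => rw [pow_succ, MulAut.mul_apply]; exact ih

lemma inl_central {k : Type*} [Field k] (c : kˣ) (B : Gbe k) :
    SemidirectProduct.inl ((c, c) : kˣ × kˣ) * B = B * SemidirectProduct.inl (c, c) := by
  refine SemidirectProduct.ext ?_ ?_
  · simp only [SemidirectProduct.mul_left, SemidirectProduct.left_inl,
      SemidirectProduct.right_inl, _root_.map_one, MulAut.one_apply]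
    rw [show (swapHom k B.right) ((c, c) : kˣ × kˣ) = (c, c) from swap_pow_fix _ c]
    exact mul_comm _ _
  · simp [SemidirectProduct.mul_right]

lemma scMap_mul_mul {k : Type*} [Field k] (a b : kˣ) (x y : GL (Fin 2) k) :
    scMap k (a * b) * (x * y) = (scMap k a * x) * (scMap k b * y) := by
  rw [_root_.map_mul]
  conv_rhs => rw [mul_assoc, ← mul_assoc x, ← scMap_comm b x, mul_assoc, ← mul_assoc]

lemma inl_mul_mul {k : Type*} [Field k] (a b : kˣ) (x y : Gbe k) :
    SemidirectProduct.inl ((a * b, a * b) : kˣ × kˣ) * (x * y) =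
      (SemidirectProduct.inl (a, a) * x) * (SemidirectProduct.inl (b, b) * y) := by
  have h : ((a * b, a * b) : kˣ × kˣ) = (a, a) * (b, b) := rfl
  rw [h, _root_.map_mul]
  conv_rhs => rw [mul_assoc, ← mul_assoc x, ← inl_central b x, mul_assoc, ← mul_assoc]

def phiMap (k : Type*) [Field k] : GL (Fin 2) k × Gbe k × kˣ →* GL (Fin 2) k × Gbe k where
  toFun x :=
    (scMap k (Matrix.GeneralLinearGroup.det x.1 / x.2.2) * x.1,
      SemidirectProduct.inl
        ((Matrix.GeneralLinearGroup.det x.1 / x.2.2) ^ 4,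
         (Matrix.GeneralLinearGroup.det x.1 / x.2.2) ^ 4) * x.2.1)
  map_one' := by simp; rw [← Prod.one_eq_mk, _root_.map_one]
  map_mul' := by
    rintro ⟨A, B, t⟩ ⟨A', B', t'⟩
    have hd : Matrix.GeneralLinearGroup.det (A * A') / (t * t') =
        (Matrix.GeneralLinearGroup.det A / t) * (Matrix.GeneralLinearGroup.det A' / t') := by
      rw [_root_.map_mul, div_mul_div_comm]
    refine Prod.ext ?_ ?_
    · show scMap k (Matrix.GeneralLinearGroup.det (A * A') / (t * t')) * (A * A') = _
      rw [hd, scMap_mul_mul]; rfl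
    · show SemidirectProduct.inl
          ((Matrix.GeneralLinearGroup.det (A * A') / (t * t')) ^ 4,
           (Matrix.GeneralLinearGroup.det (A * A') / (t * t')) ^ 4) * (B * B') = _
      rw [hd, mul_pow, inl_mul_mul]; rfl

def psiMap (k : Type*) [Field k] : kˣ →* GL (Fin 2) k × Gbe k × kˣ where
  toFun t := (scMap k t, SemidirectProduct.inl (t ^ 4, t ^ 4), t ^ 3)
  map_one' := by simp; rw [← Prod.one_eq_mk, _root_.map_one]
  map_mul' a b := by
    refine Prod.ext (_root_.map_mul _ _ _) (Prod.ext ?_ (mul_pow a b 3))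
    show SemidirectProduct.inl ((a * b) ^ 4, (a * b) ^ 4) =
      SemidirectProduct.inl (a ^ 4, a ^ 4) * SemidirectProduct.inl (b ^ 4, b ^ 4)
    rw [← _root_.map_mul]
    congr 1
    rw [Prod.mk_mul_mk, mul_pow]

lemma phi_section {k : Type*} [Field k] (A : GL (Fin 2) k) (B : Gbe k) :
    phiMap k (A, B, Matrix.GeneralLinearGroup.det A) = (A, B) := by
  show (scMap k (Matrix.GeneralLinearGroup.det A / Matrix.GeneralLinearGroup.det A) * A,
    SemidirectProduct.inl
      ((Matrix.GeneralLinearGroup.det A / Matrix.GeneralLinearGroup.det A) ^ 4,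
       (Matrix.GeneralLinearGroup.det A / Matrix.GeneralLinearGroup.det A) ^ 4) * B) = (A, B)
  rw [div_self']
  refine Prod.ext ?_ ?_
  · show scMap k 1 * A = A
    rw [_root_.map_one, one_mul]
  · show SemidirectProduct.inl ((1 : kˣ) ^ 4, (1 : kˣ) ^ 4) * B = B
    rw [one_pow, ← Prod.one_eq_mk, _root_.map_one, one_mul]

theorem stmt1 (k : Type*) [Field k] :
    ∃ (φ : GL (Fin 2) k × Gbe k × kˣ →* GL (Fin 2) k × Gbe k)
      (ψ : kˣ →* GL (Fin 2) k × Gbe k × kˣ),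
      (∀ (A : GL (Fin 2) k) (B : Gbe k) (t : kˣ),
        φ (A, B, t) =
          (Units.map (algebraMap k (Matrix (Fin 2) (Fin 2) k)).toMonoidHom
              (Matrix.GeneralLinearGroup.det A / t) * A,
            SemidirectProduct.inl
                ((Matrix.GeneralLinearGroup.det A / t) ^ 4,
                  (Matrix.GeneralLinearGroup.det A / t) ^ 4) * B)) ∧
      (∀ t : kˣ,
        ψ t = (Units.map (algebraMap k (Matrix (Fin 2) (Fin 2) k)).toMonoidHom t,
          SemidirectProduct.inl (t ^ 4, t ^ 4), t ^ 3)) ∧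
      Function.Surjective φ ∧
      φ.ker = ψ.range ∧
      (∀ (A : GL (Fin 2) k) (B : Gbe k),
        φ (A, B, Matrix.GeneralLinearGroup.det A) = (A, B)) := by
  refine ⟨phiMap k, psiMap k, fun A B t => rfl, fun t => rfl, ?_, ?_, fun A B => phi_section A B⟩
  · intro x
    exact ⟨(x.1, x.2, Matrix.GeneralLinearGroup.det x.1), phi_section x.1 x.2⟩
  · ext ⟨A, B, t⟩
    simp only [MonoidHom.mem_ker, MonoidHom.mem_range]
    constructor
    · intro h
      have h1 : scMap k (Matrix.GeneralLinearGroup.det A / t) * A = 1 := congrArg Prod.fst h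
      have h2 : SemidirectProduct.inl
          ((Matrix.GeneralLinearGroup.det A / t) ^ 4,
           (Matrix.GeneralLinearGroup.det A / t) ^ 4) * B = 1 := congrArg Prod.snd h
      obtain ⟨s, hs⟩ : ∃ s : kˣ, s = Matrix.GeneralLinearGroup.det A / t := ⟨_, rfl⟩
      rw [← hs] at h1 h2
      have hA : A = scMap k s⁻¹ := by
        rw [map_inv]
        exact eq_inv_of_mul_eq_one_right h1
      have hB : B = SemidirectProduct.inl ((s⁻¹) ^ 4, (s⁻¹) ^ 4) := by
        have h3 := eq_inv_of_mul_eq_one_right h2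
        rw [h3, ← _root_.map_inv]
        congr 1
      have hdet : Matrix.GeneralLinearGroup.det A = (s⁻¹) ^ 2 := by
        rw [hA, det_scMap]
      have hst : s * t = (s⁻¹) ^ 2 := by
        calc s * t = Matrix.GeneralLinearGroup.det A := by rw [hs, div_mul_cancel]
          _ = (s⁻¹) ^ 2 := hdet
      have ht : t = (s⁻¹) ^ 3 := by
        calc t = s⁻¹ * (s * t) := by rw [← mul_assoc, inv_mul_cancel, one_mul]
          _ = s⁻¹ * (s⁻¹) ^ 2 := by rw [hst]
          _ = (s⁻¹) ^ 3 := (pow_succ' s⁻¹ 2).symm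
      exact ⟨s⁻¹, by rw [Prod.ext_iff, Prod.ext_iff]; exact ⟨hA.symm, hB.symm, ht.symm⟩⟩
    · rintro ⟨u, hu⟩
      rw [← hu]
      show (scMap k (Matrix.GeneralLinearGroup.det (scMap k u) / u ^ 3) * scMap k u,
        SemidirectProduct.inl
          ((Matrix.GeneralLinearGroup.det (scMap k u) / u ^ 3) ^ 4,
           (Matrix.GeneralLinearGroup.det (scMap k u) / u ^ 3) ^ 4) *
          SemidirectProduct.inl (u ^ 4, u ^ 4)) = 1
      have hq : Matrix.GeneralLinearGroup.det (scMap k u) / u ^ 3 = u⁻¹ := by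
        rw [det_scMap, div_eq_iff_eq_mul, pow_succ' u 2, ← mul_assoc, inv_mul_cancel, one_mul]
      rw [hq]
      refine Prod.ext ?_ ?_
      · show scMap k u⁻¹ * scMap k u = 1
        rw [map_inv, inv_mul_cancel]
      · show SemidirectProduct.inl ((u⁻¹) ^ 4, (u⁻¹) ^ 4) * SemidirectProduct.inl (u ^ 4, u ^ 4) = 1
        rw [← _root_.map_mul, Prod.mk_mul_mk, inv_pow, inv_mul_cancel, ← Prod.one_eq_mk,
          _root_.map_one]
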